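/- Let f : ℝⁿ → ℝⁿ be a polynomial vector field with solution map φ of the ODE ẋ = f(x). Suppose A* ⊂ ℝⁿ is the minimal attractor set of the ODE, σ > 0, and Ω ⊂ ℝⁿ is a compact set with B(A*,σ) ⊆ Ω and Ω ⊂ BOA_f(A*), where Ω = {x ∈ ℝⁿ : g_Ω(x) ≥ 0} and ∂Ω = {x ∈ ℝⁿ : g_Ω(x) = 0} for a polynomial g_Ω. Let α > 0 and let J be a sum-of-squares polynomial for which there exist a sum-of-squares polynomial s₀ and a polynomial p₀ such that k₀(x) := −∇J(x)ᵀ f(x) − (J(x) − 1) − s₀(x)g_Ω(x) and k₁(x) := (J(x) − 1 − α) − p₀(x)g_Ω(x) are both sum-of-squares polynomials. Then {x ∈ Ω : J(x) ≤ 1} is a stable compact attractor set of the ODE and A* ⊆ {x ∈ Ω : J(x) ≤ 1}. -/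

import Mathlib

open Set Filter MeasureTheory Metric Topology

noncomputable section

/-- `φ` is a solution map of the ODE `ẋ = f(x)` on `ℝⁿ × [0,∞)`. -/
def IsSolutionMap {n : ℕ} (f : EuclideanSpace ℝ (Fin n) → EuclideanSpace ℝ (Fin n))
    (φ : EuclideanSpace ℝ (Fin n) → ℝ → EuclideanSpace ℝ (Fin n)) : Prop :=
  (∀ x, ∀ t ≥ (0:ℝ), HasDerivWithinAt (φ x) (f (φ x t)) (Set.Ici 0) t) ∧
  (∀ x, φ x 0 = x) ∧
  (∀ x, ∀ t ≥ (0:ℝ), ∀ s ≥ (0:ℝ), φ (φ x t) s = φ x (t + s))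

/-- `A` is a stable compact attractor set of the ODE with solution map `φ`. -/
def IsAttractor {n : ℕ} (φ : EuclideanSpace ℝ (Fin n) → ℝ → EuclideanSpace ℝ (Fin n))
    (A : Set (EuclideanSpace ℝ (Fin n))) : Prop :=
  IsCompact A ∧ A.Nonempty ∧
  (∀ x ∈ A, ∀ t ≥ (0:ℝ), φ x t ∈ A) ∧
  (∀ x ∈ A, ∃ δ > (0:ℝ), ∀ ε > (0:ℝ), ∃ T ≥ (0:ℝ),
    ∀ y ∈ Metric.ball x δ, ∀ t ≥ T, Metric.infDist (φ y t) A < ε) ∧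
  (∀ ε > (0:ℝ), ∃ δ > (0:ℝ), ∀ x ∈ Metric.thickening δ A, ∀ t ≥ (0:ℝ),
    Metric.infDist (φ x t) A < ε)
/-- The basin of attraction of the set `A` under the solution map `φ`. -/
def BOA {n : ℕ} (φ : EuclideanSpace ℝ (Fin n) → ℝ → EuclideanSpace ℝ (Fin n))
    (A : Set (EuclideanSpace ℝ (Fin n))) : Set (EuclideanSpace ℝ (Fin n)) :=
  {x | Filter.Tendsto (fun t => Metric.infDist (φ x t) A) Filter.atTop (nhds 0)}

/-- `A` is a minimal attractor set: it is an attractor set and no attractor set is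
strictly contained in it. -/
def IsMinimalAttractor {n : ℕ} (φ : EuclideanSpace ℝ (Fin n) → ℝ → EuclideanSpace ℝ (Fin n))
    (A : Set (EuclideanSpace ℝ (Fin n))) : Prop :=
  IsAttractor φ A ∧ ∀ B, IsAttractor φ B → ¬ B ⊂ A

/-- `p` is a sum-of-squares polynomial. -/
def IsSOS {n : ℕ} (p : MvPolynomial (Fin n) ℝ) : Prop :=
  ∃ (k : ℕ) (q : Fin k → MvPolynomial (Fin n) ℝ), p = ∑ i, (q i) ^ 2

/-- Evaluation of a polynomial at a point of Euclidean space. -/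
def pEval {n : ℕ} (p : MvPolynomial (Fin n) ℝ) (x : EuclideanSpace ℝ (Fin n)) : ℝ :=
  MvPolynomial.eval (fun i => x i) p

/-- The polynomial vector field determined by an `n`-tuple of polynomials. -/
def polyField {n : ℕ} (F : Fin n → MvPolynomial (Fin n) ℝ)
    (x : EuclideanSpace ℝ (Fin n)) : EuclideanSpace ℝ (Fin n) :=
  WithLp.toLp 2 (fun i => pEval (F i) x)

namespace SOSAttractorAux

open MvPolynomial

variable {n : ℕ}

lemma sos_nonneg {p : MvPolynomial (Fin n) ℝ} (hp : IsSOS p) (x : EuclideanSpace ℝ (Fin n)) :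
    0 ≤ pEval p x := by
  obtain ⟨k, q, rfl⟩ := hp
  rw [pEval, map_sum]
  exact Finset.sum_nonneg fun i _ => by rw [map_pow]; exact sq_nonneg _

lemma pEval_continuous (p : MvPolynomial (Fin n) ℝ) : Continuous (pEval p) := by
  have h : Continuous (fun x : EuclideanSpace ℝ (Fin n) => (fun i => x i : Fin n → ℝ)) :=
    continuous_pi fun i => (EuclideanSpace.proj (𝕜 := ℝ) i).continuous
  exact (MvPolynomial.continuous_eval p).comp h

lemma hasDerivWithinAt_pEval_comp (F : Fin n → MvPolynomial (Fin n) ℝ)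
    {γ : ℝ → EuclideanSpace ℝ (Fin n)} {s : Set ℝ} {t : ℝ}
    (hγ : HasDerivWithinAt γ (polyField F (γ t)) s t)
    (p : MvPolynomial (Fin n) ℝ) :
    HasDerivWithinAt (fun u => pEval p (γ u))
      (∑ i, pEval (pderiv i p) (γ t) * pEval (F i) (γ t)) s t := by
  induction p using MvPolynomial.induction_on with
  | C a =>
      simp only [pEval, pderiv_C, map_zero, zero_mul, Finset.sum_const_zero, eval_C]
      exact hasDerivWithinAt_const t s a
  | add p q hp hq =>
      have h := hp.add hq
      simp only [pEval, map_add] at h ⊢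
      simp only [add_mul, Finset.sum_add_distrib]; exact h
  | mul_X p i hp =>
      have hcoord : HasDerivWithinAt (fun u => γ u i) (pEval (F i) (γ t)) s t := by
        have := (EuclideanSpace.proj (𝕜 := ℝ) i).hasFDerivAt.comp_hasDerivWithinAt t hγ
        simp [polyField] at this; exact this
      have h := hp.mul hcoord
      have hfun : (fun u => pEval (p * X i) (γ u)) = fun u => pEval p (γ u) * γ u i := by
        funext u; simp [pEval]
      have hXd : ∀ j : Fin n, (eval fun k => γ t k) ((pderiv j (X i)) : MvPolynomial (Fin n) ℝ)
          = if i = j then 1 else 0 := by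
        intro j; rw [pderiv_X]
        simp [Pi.single_apply, apply_ite (MvPolynomial.eval fun k => γ t k)]
      have key : (∑ j, pEval (pderiv j (p * X i)) (γ t) * pEval (F j) (γ t))
          = (∑ j, pEval (pderiv j p) (γ t) * pEval (F j) (γ t)) * γ t i
            + pEval p (γ t) * pEval (F i) (γ t) := by
        simp only [pEval, pderiv_mul, map_add, map_mul, eval_X, hXd, mul_ite, mul_one, mul_zero,
          ite_mul, zero_mul, add_mul, Finset.sum_add_distrib, Finset.sum_ite_eq,
          Finset.mem_univ, if_true, Finset.sum_mul]
        congr 1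
        exact Finset.sum_congr rfl fun j _ => by ring
      rw [hfun, key]
      exact h

/-- Grönwall-type estimate: while the trajectory stays in `Ω`, `J - 1` decays
at least exponentially. -/
lemma gronwall (F : Fin n → MvPolynomial (Fin n) ℝ)
    (φ : EuclideanSpace ℝ (Fin n) → ℝ → EuclideanSpace ℝ (Fin n))
    (Ω : Set (EuclideanSpace ℝ (Fin n))) (gΩ J s₀ : MvPolynomial (Fin n) ℝ)
    (hφ : IsSolutionMap (polyField F) φ)
    (hΩeq : Ω = {x | 0 ≤ pEval gΩ x})
    (hs₀ : IsSOS s₀)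
    (hk₀ : IsSOS (-(∑ i, MvPolynomial.pderiv i J * F i) - (J - 1) - s₀ * gΩ))
    {x : EuclideanSpace ℝ (Fin n)} {t : ℝ} (ht : 0 ≤ t)
    (hin : ∀ s ∈ Icc (0:ℝ) t, φ x s ∈ Ω) :
    pEval J (φ x t) - 1 ≤ (pEval J x - 1) * Real.exp (-t) := by
  set u : ℝ → ℝ := fun s => pEval J (φ x s) with hu
  have hderiv : ∀ s ∈ Ici (0:ℝ), HasDerivWithinAt u
      (∑ i, pEval (pderiv i J) (φ x s) * pEval (F i) (φ x s)) (Ici 0) s :=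
    fun s hs => hasDerivWithinAt_pEval_comp F (hφ.1 x s hs) J
  have hbound : ∀ s ∈ Icc (0:ℝ) t,
      (∑ i, pEval (pderiv i J) (φ x s) * pEval (F i) (φ x s)) ≤ 1 - u s := by
    intro s hs
    have h0 := sos_nonneg hk₀ (φ x s)
    have hg : 0 ≤ pEval gΩ (φ x s) := by
      have := hin s hs; rw [hΩeq] at this; exact this
    have hs0 := sos_nonneg hs₀ (φ x s)
    have hexp : pEval (-(∑ i, MvPolynomial.pderiv i J * F i) - (J - 1) - s₀ * gΩ) (φ x s)
        = -(∑ i, pEval (pderiv i J) (φ x s) * pEval (F i) (φ x s))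
          - (pEval J (φ x s) - 1) - pEval s₀ (φ x s) * pEval gΩ (φ x s) := by
      simp [pEval, map_sub, map_neg, map_sum, map_mul, map_one]
    rw [hexp] at h0
    nlinarith [mul_nonneg hs0 hg]
  set w : ℝ → ℝ := fun s => (u s - 1) * Real.exp s with hw
  have hwanti : AntitoneOn w (Icc 0 t) := by
    apply antitoneOn_of_deriv_nonpos (convex_Icc 0 t)
    · have hcu : ContinuousOn u (Icc 0 t) := fun s hs =>
        ((hderiv s hs.1).continuousWithinAt).mono (Icc_subset_Ici_self.trans (by norm_num))
      exact ((hcu.sub continuousOn_const).mul Real.continuous_exp.continuousOn)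
    · intro s hs
      rw [interior_Icc] at hs
      have hu' := (hderiv s (le_of_lt hs.1)).hasDerivAt (Ici_mem_nhds hs.1)
      exact (((hu'.sub_const 1).mul (Real.hasDerivAt_exp s))).differentiableAt.differentiableWithinAt
    · intro s hs
      rw [interior_Icc] at hs
      have hu' := (hderiv s (le_of_lt hs.1)).hasDerivAt (Ici_mem_nhds hs.1)
      have hw' : HasDerivAt w
          ((∑ i, pEval (pderiv i J) (φ x s) * pEval (F i) (φ x s)) * Real.exp s
            + (u s - 1) * Real.exp s) s :=
        (hu'.sub_const 1).mul (Real.hasDerivAt_exp s)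
      rw [hw'.deriv]
      have hb := hbound s ⟨le_of_lt hs.1, le_of_lt hs.2⟩
      nlinarith [Real.exp_pos s]
  have h0t : w t ≤ w 0 := hwanti ⟨le_refl 0, ht⟩ ⟨ht, le_refl t⟩ ht
  have hw0 : w 0 = pEval J x - 1 := by
    simp [hw, hu, hφ.2.1 x]
  have hmul : Real.exp t * Real.exp (-t) = 1 := by
    rw [← Real.exp_add]; simp
  rw [hw0] at h0t
  have := mul_le_mul_of_nonneg_right h0t (le_of_lt (Real.exp_pos (-t)))
  calc pEval J (φ x t) - 1 = (u t - 1) * Real.exp t * Real.exp (-t) := by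
        rw [mul_assoc, hmul, mul_one]
    _ ≤ (pEval J x - 1) * Real.exp (-t) := this

/-- If `x ∈ Ω` and `J(x) < 1 + α`, the trajectory can never leave `Ω`. -/
lemma stays_in (F : Fin n → MvPolynomial (Fin n) ℝ)
    (φ : EuclideanSpace ℝ (Fin n) → ℝ → EuclideanSpace ℝ (Fin n))
    (Ω : Set (EuclideanSpace ℝ (Fin n))) (gΩ J s₀ p₀ : MvPolynomial (Fin n) ℝ) {α : ℝ}
    (hφ : IsSolutionMap (polyField F) φ)
    (hΩc : IsCompact Ω)
    (hΩeq : Ω = {x | 0 ≤ pEval gΩ x})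
    (hΩfr : frontier Ω = {x | pEval gΩ x = 0})
    (hα : 0 < α)
    (hs₀ : IsSOS s₀)
    (hk₀ : IsSOS (-(∑ i, MvPolynomial.pderiv i J * F i) - (J - 1) - s₀ * gΩ))
    (hk₁ : IsSOS ((J - 1 - MvPolynomial.C α) - p₀ * gΩ))
    {x : EuclideanSpace ℝ (Fin n)} (hxΩ : x ∈ Ω) (hJx : pEval J x < 1 + α) :
    ∀ t ≥ (0:ℝ), φ x t ∈ Ω := by
  by_contra hcon
  push_neg at hcon
  set E : Set ℝ := {s | 0 ≤ s ∧ φ x s ∉ Ω} with hE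
  have hEne : E.Nonempty := by
    obtain ⟨t, ht, hmem⟩ := hcon; exact ⟨t, ht, hmem⟩
  have hbdd : BddBelow E := ⟨0, fun s hs => hs.1⟩
  set τ := sInf E with hτ
  have hτ0 : 0 ≤ τ := le_csInf hEne fun s hs => hs.1
  have hIco : ∀ s, 0 ≤ s → s < τ → φ x s ∈ Ω := by
    intro s h1 h2
    by_contra hc
    exact absurd (csInf_le hbdd ⟨h1, hc⟩) (not_le.2 h2)
  have hcont : ContinuousOn (φ x) (Ici 0) := fun s hs =>
    (hφ.1 x s hs).continuousWithinAt
  -- φ x τ is a limit of points of E from the right, so it lies in `closure Ωᶜ`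
  have hseq : ∀ k : ℕ, ∃ s ∈ E, s < τ + 1/(k+1) := by
    intro k
    obtain ⟨s, hsE, hlt⟩ := exists_lt_of_csInf_lt hEne
      (lt_add_of_pos_right τ (by positivity : (0:ℝ) < 1/(k+1)))
    exact ⟨s, hsE, hlt⟩
  choose sk hskE hsklt using hseq
  have hsk_ge : ∀ k, τ ≤ sk k := fun k => csInf_le hbdd (hskE k)
  have hsktend : Tendsto sk atTop (𝓝 τ) := by
    have h2 : Tendsto (fun k : ℕ => τ + 1/((k:ℝ)+1)) atTop (𝓝 (τ + 0)) :=
      tendsto_const_nhds.add tendsto_one_div_add_atTop_nhds_zero_nat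
    rw [add_zero] at h2
    exact tendsto_of_tendsto_of_tendsto_of_le_of_le tendsto_const_nhds h2
      hsk_ge (fun k => le_of_lt (hsklt k))
  have hφtend : Tendsto (fun k => φ x (sk k)) atTop (𝓝 (φ x τ)) := by
    have h1 : Tendsto sk atTop (𝓝[Ici 0] τ) :=
      tendsto_nhdsWithin_of_tendsto_nhds_of_eventually_within _ hsktend
        (Eventually.of_forall fun k => (hskE k).1)
    exact ((hcont τ hτ0).tendsto).comp h1
  have hτcl : φ x τ ∈ closure Ωᶜ :=
    mem_closure_of_tendsto hφtend (Eventually.of_forall fun k => (hskE k).2)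
  -- φ x τ ∈ Ω
  have hτΩ : φ x τ ∈ Ω := by
    rcases eq_or_lt_of_le hτ0 with h | h
    · rw [← h, hφ.2.1 x]; exact hxΩ
    · have hne : (𝓝[Ico 0 τ] τ).NeBot := by
        apply mem_closure_iff_nhdsWithin_neBot.mp
        rw [closure_Ico (ne_of_lt h)]
        exact ⟨hτ0, le_refl τ⟩
      have htend : Tendsto (φ x) (𝓝[Ico 0 τ] τ) (𝓝 (φ x τ)) :=
        ((hcont τ hτ0).mono (fun s hs => hs.1)).tendsto
      exact hΩc.isClosed.mem_of_tendsto htend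
        (eventually_mem_nhdsWithin.mono fun s hs => hIco s hs.1 hs.2)
  have hicc : ∀ s ∈ Icc (0:ℝ) τ, φ x s ∈ Ω := by
    intro s hs
    rcases lt_or_eq_of_le hs.2 with h | h
    · exact hIco s hs.1 h
    · rw [h]; exact hτΩ
  -- φ x τ is on the frontier of Ω, hence J ≥ 1 + α there
  have hfr : φ x τ ∈ frontier Ω := by
    rw [frontier_eq_closure_inter_closure]
    exact ⟨subset_closure hτΩ, hτcl⟩
  have hg0 : pEval gΩ (φ x τ) = 0 := by
    rw [hΩfr] at hfr; exact hfr
  have hk1 := sos_nonneg hk₁ (φ x τ)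
  have hk1' : pEval ((J - 1 - MvPolynomial.C α) - p₀ * gΩ) (φ x τ)
      = pEval J (φ x τ) - 1 - α - pEval p₀ (φ x τ) * pEval gΩ (φ x τ) := by
    simp [pEval, map_sub, map_mul, map_one]
  rw [hk1', hg0, mul_zero, sub_zero] at hk1
  -- but Grönwall keeps J < 1 + α on [0, τ]
  have hgr := gronwall F φ Ω gΩ J s₀ hφ hΩeq hs₀ hk₀ hτ0 hicc
  have he1 : Real.exp (-τ) ≤ 1 := Real.exp_le_one_iff.mpr (neg_nonpos.mpr hτ0)
  have he0 : 0 < Real.exp (-τ) := Real.exp_pos (-τ)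
  nlinarith [hgr, hk1, he1, he0, hJx]

/-- Compactness lemma: points of `K` where `g` is small are close to `K ∩ {g ≤ 0}`. -/
lemma compact_approach {K : Set (EuclideanSpace ℝ (Fin n))} (hK : IsCompact K)
    {g : EuclideanSpace ℝ (Fin n) → ℝ} (hg : Continuous g) {ε : ℝ} (hε : 0 < ε) :
    ∃ η > (0:ℝ), ∀ z ∈ K, g z ≤ η → Metric.infDist z (K ∩ {w | g w ≤ 0}) < ε := by
  by_contra h
  push_neg at h
  have h' : ∀ k : ℕ, ∃ z ∈ K, g z ≤ 1/(k+1) ∧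
      ε ≤ Metric.infDist z (K ∩ {w | g w ≤ 0}) := by
    intro k
    obtain ⟨z, hz1, hz2, hz3⟩ := h (1/(k+1)) (by positivity)
    exact ⟨z, hz1, hz2, hz3⟩
  choose z hzK hzg hzd using h'
  obtain ⟨w, hwK, ψ, hψ, hlim⟩ := hK.tendsto_subseq hzK
  have hψtop : Tendsto (fun k => ((ψ k : ℕ) : ℝ)) atTop atTop :=
    tendsto_natCast_atTop_atTop.comp hψ.tendsto_atTop
  have hrhs : Tendsto (fun k : ℕ => 1/(((ψ k : ℕ):ℝ)+1)) atTop (𝓝 0) := by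
    apply Tendsto.comp (g := fun r : ℝ => 1/(r+1))
    · have : Tendsto (fun r : ℝ => r + 1) atTop atTop := tendsto_atTop_add_const_right _ 1 tendsto_id
      simpa [one_div, Pi.inv_def] using this.inv_tendsto_atTop
    · exact hψtop
  have hgw : g w ≤ 0 := by
    have h1 : Tendsto (fun k => g (z (ψ k))) atTop (𝓝 (g w)) := (hg.tendsto w).comp hlim
    exact le_of_tendsto_of_tendsto' h1 hrhs (fun k => hzg (ψ k))
  have hwT : w ∈ K ∩ {w | g w ≤ 0} := ⟨hwK, hgw⟩
  have h2 : Tendsto (fun k => Metric.infDist (z (ψ k)) (K ∩ {w | g w ≤ 0})) atTop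
      (𝓝 (Metric.infDist w (K ∩ {w | g w ≤ 0}))) :=
    ((Metric.continuous_infDist_pt _).tendsto w).comp hlim
  have h3 : ε ≤ Metric.infDist w (K ∩ {w | g w ≤ 0}) :=
    le_of_tendsto_of_tendsto' tendsto_const_nhds h2 (fun k => hzd (ψ k))
  rw [Metric.infDist_zero_of_mem hwT] at h3
  linarith

end SOSAttractorAux


/-- parts 1 and 2 of Cor. 14 of the paper: if `A*` is the minimal attractor
set of the polynomial ODE `ẋ = f(x)`, `B(A*,σ) ⊆ Ω ⊆ BOA_f(A*)` with
`Ω = {g_Ω ≥ 0}` compact and `∂Ω = {g_Ω = 0}`, and `J` is an SOS polynomial admitting SOS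
certificates `k₀ = −∇Jᵀf − (J−1) − s₀ g_Ω` and `k₁ = (J−1−α) − p₀ g_Ω` with `s₀` SOS,
then `{x ∈ Ω : J(x) ≤ 1}` is a stable compact attractor set containing `A*`. -/
theorem sos_feasible_gives_attractor {n : ℕ}
    (F : Fin n → MvPolynomial (Fin n) ℝ)
    (φ : EuclideanSpace ℝ (Fin n) → ℝ → EuclideanSpace ℝ (Fin n))
    (Astar Ω : Set (EuclideanSpace ℝ (Fin n)))
    (gΩ J s₀ p₀ : MvPolynomial (Fin n) ℝ) (σ α : ℝ)
    (hφ : IsSolutionMap (polyField F) φ)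
    (hA : IsMinimalAttractor φ Astar)
    (hσ : 0 < σ)
    (hΩc : IsCompact Ω)
    (hΩeq : Ω = {x | 0 ≤ pEval gΩ x})
    (hΩfr : frontier Ω = {x | pEval gΩ x = 0})
    (hthick : Metric.thickening σ Astar ⊆ Ω)
    (hΩBOA : Ω ⊆ BOA φ Astar)
    (hα : 0 < α)
    (hJ : IsSOS J) (hs₀ : IsSOS s₀)
    (hk₀ : IsSOS (-(∑ i, MvPolynomial.pderiv i J * F i) - (J - 1) - s₀ * gΩ))
    (hk₁ : IsSOS ((J - 1 - MvPolynomial.C α) - p₀ * gΩ)) :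
    IsAttractor φ {x ∈ Ω | pEval J x ≤ 1} ∧ Astar ⊆ {x ∈ Ω | pEval J x ≤ 1} := by
  classical
  obtain ⟨hAatt, hAmin⟩ := hA
  obtain ⟨hAcomp, hAne, hAinv, hAc3, hAc4⟩ := hAatt
  set S := {x ∈ Ω | pEval J x ≤ 1} with hS
  have hJcont := SOSAttractorAux.pEval_continuous J
  have hAΩ : Astar ⊆ Ω := (self_subset_thickening hσ Astar).trans hthick
  have hSeq : S = Ω ∩ {z | pEval J z ≤ 1} := by ext z; simp [hS, Set.mem_sep_iff]
  have hSclosed : IsClosed S := by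
    rw [hSeq]; exact hΩc.isClosed.inter (isClosed_le hJcont continuous_const)
  have hScomp : IsCompact S := hΩc.of_isClosed_subset hSclosed (Set.sep_subset _ _)
  -- trajectories starting in Ω with J < 1 + α stay in Ω and satisfy the Grönwall bound
  have hstays : ∀ x ∈ Ω, pEval J x < 1 + α → ∀ t ≥ (0:ℝ),
      φ x t ∈ Ω ∧ pEval J (φ x t) - 1 ≤ (pEval J x - 1) * Real.exp (-t) := by
    intro x hx hJx t ht
    have h1 := SOSAttractorAux.stays_in F φ Ω gΩ J s₀ p₀ hφ hΩc hΩeq hΩfr hα hs₀ hk₀ hk₁ hx hJx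
    exact ⟨h1 t ht, SOSAttractorAux.gronwall F φ Ω gΩ J s₀ hφ hΩeq hs₀ hk₀ ht
      (fun s hs => h1 s hs.1)⟩
  have gronwallA : ∀ x ∈ Astar, ∀ t ≥ (0:ℝ),
      pEval J (φ x t) - 1 ≤ (pEval J x - 1) * Real.exp (-t) := by
    intro x hx t ht
    exact SOSAttractorAux.gronwall F φ Ω gΩ J s₀ hφ hΩeq hs₀ hk₀ ht
      (fun s hs => hAΩ (hAinv x hx s hs.1))
  -- J ≥ 1 + α on the frontier of Ω
  have hfrJ : ∀ z ∈ frontier Ω, 1 + α ≤ pEval J z := by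
    intro z hz
    have h0 := SOSAttractorAux.sos_nonneg hk₁ z
    have hg0 : pEval gΩ z = 0 := by rw [hΩfr] at hz; exact hz
    have hexp : pEval ((J - 1 - MvPolynomial.C α) - p₀ * gΩ) z
        = pEval J z - 1 - α - pEval p₀ z * pEval gΩ z := by
      simp [pEval, map_sub, map_mul, map_one]
    rw [hexp, hg0, mul_zero, sub_zero] at h0
    linarith
  have hSint : ∀ z ∈ S, z ∈ interior Ω := by
    intro z hz
    by_contra hc
    have hzfr : z ∈ frontier Ω := by
      rw [hΩc.isClosed.frontier_eq]; exact ⟨hz.1, hc⟩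
    have := hfrJ z hzfr
    have := hz.2
    linarith
  -- points of Ω where J is close to 1 are close to S
  have keyS : ∀ ε > (0:ℝ), ∃ η > (0:ℝ), ∀ z ∈ Ω, pEval J z ≤ 1 + η →
      Metric.infDist z S < ε := by
    intro ε hε
    obtain ⟨η, hη, hkey⟩ := SOSAttractorAux.compact_approach hΩc
      (g := fun z => pEval J z - 1) (hJcont.sub continuous_const) hε
    refine ⟨η, hη, fun z hz hJz => ?_⟩
    have hTeq : Ω ∩ {w | pEval J w - 1 ≤ 0} = S := by
      rw [hSeq]; ext w; simp [sub_nonpos]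
    have := hkey z hz (by linarith)
    rwa [hTeq] at this
  set B := Astar ∩ {z | pEval J z ≤ 1} with hB
  have hBcomp : IsCompact B := hAcomp.inter_right (isClosed_le hJcont continuous_const)
  have hBsub : B ⊆ Astar := Set.inter_subset_left
  have keyB : ∀ ε > (0:ℝ), ∃ η > (0:ℝ), ∀ z ∈ Ω, pEval J z ≤ 1 + η →
      Metric.infDist z Astar ≤ η → Metric.infDist z B < ε := by
    intro ε hε
    obtain ⟨η, hη, hkey⟩ := SOSAttractorAux.compact_approach hΩc
      (g := fun z => max (pEval J z - 1) (Metric.infDist z Astar))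
      ((hJcont.sub continuous_const).max (Metric.continuous_infDist_pt Astar)) hε
    refine ⟨η, hη, fun z hz hJz hdz => ?_⟩
    have hTeq : Ω ∩ {w | max (pEval J w - 1) (Metric.infDist w Astar) ≤ 0} = B := by
      ext w
      simp only [Set.mem_inter_iff, Set.mem_setOf_eq, max_le_iff, sub_nonpos, hB]
      constructor
      · rintro ⟨hwΩ, hJw, hd⟩
        have hd0 : Metric.infDist w Astar = 0 := le_antisymm hd Metric.infDist_nonneg
        exact ⟨(hAcomp.isClosed.mem_iff_infDist_zero hAne).mpr hd0, hJw⟩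
      · rintro ⟨hwA, hJw⟩
        exact ⟨hAΩ hwA, hJw, le_of_eq (Metric.infDist_zero_of_mem hwA)⟩
    have := hkey z hz (max_le (by linarith) hdz)
    rwa [hTeq] at this
  have hTgeom : ∀ η > (0:ℝ), ∃ T ≥ (0:ℝ), α * Real.exp (-T) ≤ η := by
    intro η hη
    refine ⟨max 0 (Real.log (α/η)), le_max_left _ _, ?_⟩
    have h1 : Real.exp (-(max 0 (Real.log (α/η)))) ≤ Real.exp (-(Real.log (α/η))) :=
      Real.exp_le_exp.mpr (neg_le_neg (le_max_right _ _))
    have h2 : Real.exp (-(Real.log (α/η))) = η/α := by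
      rw [Real.exp_neg, Real.exp_log (div_pos hα hη), inv_div]
    rw [h2] at h1
    calc α * Real.exp (-(max 0 (Real.log (α/η)))) ≤ α * (η/α) :=
          mul_le_mul_of_nonneg_left h1 hα.le
      _ = η := by field_simp
  -- forward invariance of S
  have hSinv : ∀ x ∈ S, ∀ t ≥ (0:ℝ), φ x t ∈ S := by
    intro x hx t ht
    obtain ⟨h1, h2⟩ := hstays x hx.1 (by linarith [hx.2]) t ht
    have h3 : pEval J x - 1 ≤ 0 := by linarith [hx.2]
    exact ⟨h1, by nlinarith [Real.exp_pos (-t)]⟩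
  -- condition 3 for S
  have hSc3 : ∀ x ∈ S, ∃ δ > (0:ℝ), ∀ ε > (0:ℝ), ∃ T ≥ (0:ℝ),
      ∀ y ∈ Metric.ball x δ, ∀ t ≥ T, Metric.infDist (φ y t) S < ε := by
    intro x hx
    have hUopen : IsOpen (interior Ω ∩ {z | pEval J z < 1 + α}) :=
      isOpen_interior.inter (isOpen_lt hJcont continuous_const)
    have hxU : x ∈ interior Ω ∩ {z | pEval J z < 1 + α} :=
      ⟨hSint x hx, by simp only [Set.mem_setOf_eq]; linarith [hx.2]⟩
    obtain ⟨δ, hδ, hball⟩ := Metric.isOpen_iff.mp hUopen x hxU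
    refine ⟨δ, hδ, fun ε hε => ?_⟩
    obtain ⟨η, hη, hkey⟩ := keyS ε hε
    obtain ⟨T, hT0, hT⟩ := hTgeom η hη
    refine ⟨T, hT0, fun y hy t ht => ?_⟩
    have hyU := hball hy
    have hyΩ : y ∈ Ω := interior_subset hyU.1
    have hyJ : pEval J y < 1 + α := hyU.2
    have ht0 : (0:ℝ) ≤ t := le_trans hT0 ht
    obtain ⟨hφΩ, hφJ⟩ := hstays y hyΩ hyJ t ht0
    apply hkey _ hφΩ
    have hee : Real.exp (-t) ≤ Real.exp (-T) := Real.exp_le_exp.mpr (by linarith)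
    have hJy1 : (pEval J y - 1) * Real.exp (-t) ≤ η := by
      rcases le_or_gt (pEval J y) 1 with h | h
      · nlinarith [Real.exp_pos (-t)]
      · nlinarith [Real.exp_pos (-t), mul_le_mul_of_nonneg_left hee hα.le, hT]
    linarith
  -- condition 4 for S
  have hSc4 : ∀ ε > (0:ℝ), ∃ δ > (0:ℝ), ∀ x ∈ Metric.thickening δ S, ∀ t ≥ (0:ℝ),
      Metric.infDist (φ x t) S < ε := by
    intro ε hε
    obtain ⟨η, hη, hkey⟩ := keyS ε hε
    have hη' : (0:ℝ) < min η α := lt_min hη hα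
    have hUopen : IsOpen (interior Ω ∩ {z | pEval J z < 1 + min η α}) :=
      isOpen_interior.inter (isOpen_lt hJcont continuous_const)
    have hSU : S ⊆ interior Ω ∩ {z | pEval J z < 1 + min η α} := fun z hz =>
      ⟨hSint z hz, by simp only [Set.mem_setOf_eq]; linarith [hz.2]⟩
    obtain ⟨δ, hδ, hsub⟩ := hScomp.exists_thickening_subset_open hUopen hSU
    refine ⟨δ, hδ, fun x hx t ht => ?_⟩
    have hxU := hsub hx
    have hxΩ : x ∈ Ω := interior_subset hxU.1
    have hxJ : pEval J x < 1 + min η α := hxU.2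
    obtain ⟨hφΩ, hφJ⟩ := hstays x hxΩ (by linarith [min_le_right η α]) t ht
    apply hkey _ hφΩ
    have hJx1 : (pEval J x - 1) * Real.exp (-t) ≤ min η α := by
      rcases le_or_gt (pEval J x) 1 with h | h
      · nlinarith [Real.exp_pos (-t), lt_min hη hα]
      · nlinarith [Real.exp_pos (-t), Real.exp_le_one_iff.mpr (neg_nonpos.mpr ht), lt_min hη hα]
    linarith [min_le_left η α]
  -- B is nonempty
  have hBne : B.Nonempty := by
    obtain ⟨z, hzA, hzmin⟩ := hAcomp.exists_isMinOn hAne hJcont.continuousOn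
    refine ⟨z, hzA, ?_⟩
    by_contra hgt
    simp only [Set.mem_setOf_eq, not_le] at hgt
    have h1 := gronwallA z hzA 1 zero_le_one
    have h2 : φ z 1 ∈ Astar := hAinv z hzA 1 zero_le_one
    have h3 : pEval J z ≤ pEval J (φ z 1) := hzmin h2
    have he : Real.exp (-1) < 1 := by
      have : Real.exp (-1:ℝ) < Real.exp 0 := Real.exp_lt_exp.mpr (by norm_num)
      simpa using this
    nlinarith [Real.exp_pos (-1:ℝ)]
  -- forward invariance of B
  have hBinv : ∀ x ∈ B, ∀ t ≥ (0:ℝ), φ x t ∈ B := by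
    intro x hx t ht
    refine ⟨hAinv x hx.1 t ht, ?_⟩
    have h1 := gronwallA x hx.1 t ht
    have h2 : pEval J x ≤ 1 := hx.2
    simp only [Set.mem_setOf_eq]
    nlinarith [Real.exp_pos (-t)]
  -- condition 3 for B
  have hBc3 : ∀ x ∈ B, ∃ δ > (0:ℝ), ∀ ε > (0:ℝ), ∃ T ≥ (0:ℝ),
      ∀ y ∈ Metric.ball x δ, ∀ t ≥ T, Metric.infDist (φ y t) B < ε := by
    intro x hxB
    obtain ⟨δ₀, hδ₀, hattr⟩ := hAc3 x hxB.1
    have hJop : IsOpen {z | pEval J z < 1 + α} := isOpen_lt hJcont continuous_const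
    obtain ⟨r, hr, hballr⟩ := Metric.isOpen_iff.mp hJop x
      (by simp only [Set.mem_setOf_eq]; have : pEval J x ≤ 1 := hxB.2; linarith)
    have hδpos : (0:ℝ) < min (min δ₀ σ) r := lt_min (lt_min hδ₀ hσ) hr
    refine ⟨min (min δ₀ σ) r, hδpos, fun ε hε => ?_⟩
    obtain ⟨η, hη, hkey⟩ := keyB ε hε
    obtain ⟨T₁, hT₁0, hT₁⟩ := hattr η hη
    obtain ⟨T₂, hT₂0, hT₂⟩ := hTgeom η hη
    refine ⟨max T₁ T₂, le_trans hT₁0 (le_max_left _ _), fun y hy t ht => ?_⟩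
    have hyσ : y ∈ Metric.ball x σ :=
      Metric.ball_subset_ball (le_trans (min_le_left _ _) (min_le_right _ _)) hy
    have hyΩ : y ∈ Ω := hthick (Metric.ball_subset_thickening hxB.1 σ hyσ)
    have hyJ : pEval J y < 1 + α :=
      hballr (Metric.ball_subset_ball (min_le_right _ _) hy)
    have ht0 : (0:ℝ) ≤ t := le_trans (le_trans hT₁0 (le_max_left _ _)) ht
    obtain ⟨hφΩ, hφJ⟩ := hstays y hyΩ hyJ t ht0
    have hd : Metric.infDist (φ y t) Astar < η :=
      hT₁ y (Metric.ball_subset_ball (le_trans (min_le_left _ _) (min_le_left _ _)) hy)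
        t (le_trans (le_max_left _ _) ht)
    apply hkey _ hφΩ _ hd.le
    have hee : Real.exp (-t) ≤ Real.exp (-T₂) :=
      Real.exp_le_exp.mpr (by have := le_trans (le_max_right T₁ T₂) ht; linarith)
    have hJy1 : (pEval J y - 1) * Real.exp (-t) ≤ η := by
      rcases le_or_gt (pEval J y) 1 with h | h
      · nlinarith [Real.exp_pos (-t)]
      · nlinarith [Real.exp_pos (-t), mul_le_mul_of_nonneg_left hee hα.le, hT₂]
    linarith
  -- condition 4 for B
  have hBc4 : ∀ ε > (0:ℝ), ∃ δ > (0:ℝ), ∀ x ∈ Metric.thickening δ B, ∀ t ≥ (0:ℝ),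
      Metric.infDist (φ x t) B < ε := by
    intro ε hε
    obtain ⟨η, hη, hkey⟩ := keyB ε hε
    obtain ⟨δ₁, hδ₁, hstab⟩ := hAc4 η hη
    have hUopen : IsOpen ((interior Ω ∩ {z | pEval J z < 1 + min η α}) ∩
        Metric.thickening δ₁ Astar) :=
      (isOpen_interior.inter (isOpen_lt hJcont continuous_const)).inter
        Metric.isOpen_thickening
    have hBU : B ⊆ (interior Ω ∩ {z | pEval J z < 1 + min η α}) ∩
        Metric.thickening δ₁ Astar := by
      intro z hz
      have hzS : z ∈ S := ⟨hAΩ hz.1, hz.2⟩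
      refine ⟨⟨hSint z hzS, ?_⟩, self_subset_thickening hδ₁ Astar hz.1⟩
      simp only [Set.mem_setOf_eq]
      have h2 : pEval J z ≤ 1 := hz.2
      have := lt_min hη hα
      linarith
    obtain ⟨δ, hδ, hsub⟩ := hBcomp.exists_thickening_subset_open hUopen hBU
    refine ⟨δ, hδ, fun x hx t ht => ?_⟩
    have hxU := hsub hx
    have hxΩ : x ∈ Ω := interior_subset hxU.1.1
    have hxJ : pEval J x < 1 + min η α := hxU.1.2
    obtain ⟨hφΩ, hφJ⟩ := hstays x hxΩ (by linarith [min_le_right η α]) t ht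
    have hd : Metric.infDist (φ x t) Astar < η := hstab x hxU.2 t ht
    apply hkey _ hφΩ _ hd.le
    have hJx1 : (pEval J x - 1) * Real.exp (-t) ≤ min η α := by
      rcases le_or_gt (pEval J x) 1 with h | h
      · nlinarith [Real.exp_pos (-t), lt_min hη hα]
      · nlinarith [Real.exp_pos (-t), Real.exp_le_one_iff.mpr (neg_nonpos.mpr ht), lt_min hη hα]
    linarith [min_le_left η α]
  -- minimality forces B = Astar, so Astar ⊆ S
  have hBatt : IsAttractor φ B := ⟨hBcomp, hBne, hBinv, hBc3, hBc4⟩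
  have hBeq : B = Astar := by
    by_contra hne
    exact hAmin B hBatt (HasSubset.Subset.ssubset_of_ne hBsub hne)
  have hAS : Astar ⊆ S := by
    intro z hz
    have hzB : z ∈ B := hBeq ▸ hz
    exact ⟨hAΩ hz, hzB.2⟩
  exact ⟨⟨hScomp, hAne.mono hAS, hSinv, hSc3, hSc4⟩, hAS⟩
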